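/- Let H₁, H₂ be finite-dimensional complex Hilbert spaces and U a unitary on H₁ ⊗ H₂ such that for every density matrix ρ and every rank-one projection P on H₁, Tr₁( U (P ⊗ 1) ρ (P ⊗ 1) U† + U ((1−P) ⊗ 1) ρ ((1−P) ⊗ 1) U† ) = Tr₁(U ρ U†). Then U = U₁ ⊗ U₂ for some unitaries U₁, U₂. -/

import Mathlib

set_option linter.unusedSectionVars false
set_option maxHeartbeats 1000000


open Matrix Kronecker BigOperators
open scoped ComplexOrder

noncomputable section

/-- Partial trace over the first tensor factor. -/
def ptrace1 {n m : Type} [Fintype n] (ρ : Matrix (n × m) (n × m) ℂ) : Matrix m m ℂ :=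
  Matrix.of fun k l => ∑ i, ρ (i, k) (i, l)

/-- A density matrix: positive semidefinite with trace one. -/
def IsDensityMatrix {d : Type} [Fintype d] [DecidableEq d] (ρ : Matrix d d ℂ) : Prop :=
  ρ.PosSemidef ∧ ρ.trace = 1

/-- A complete family of mutually orthogonal Hermitian projections. -/
def IsProjFamily {n ι : Type} [Fintype n] [DecidableEq n] [Fintype ι] [DecidableEq ι]
    (P : ι → Matrix n n ℂ) : Prop :=
  (∀ i, (P i).IsHermitian) ∧ (∀ i j, P i * P j = if i = j then P i else 0) ∧ ∑ i, P i = 1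

/-- `(P, μ)` is the spectral decomposition of the Hermitian operator `A`. -/
def IsSpectralDecomp {n ι : Type} [Fintype n] [DecidableEq n] [Fintype ι] [DecidableEq ι]
    (A : Matrix n n ℂ) (P : ι → Matrix n n ℂ) (μ : ι → ℝ) : Prop :=
  IsProjFamily P ∧ Function.Injective μ ∧ A = ∑ i, (μ i : ℂ) • P i

namespace MCaux

variable {d : Type} [Fintype d] [DecidableEq d]

lemma star_mul_self_sum_eq_zero {z : d → ℂ} (h : ∑ i, star (z i) * z i = 0) : z = 0 := by
  have h' : ∑ i, (Complex.normSq (z i) : ℝ) = 0 := by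
    have : ∑ i, star (z i) * z i = ((∑ i, Complex.normSq (z i) : ℝ) : ℂ) := by
      push_cast
      refine Finset.sum_congr rfl fun i _ => ?_
      rw [Complex.star_def, mul_comm, Complex.mul_conj]
    rw [this] at h
    exact_mod_cast h
  funext i
  have := (Finset.sum_eq_zero_iff_of_nonneg (fun i _ => Complex.normSq_nonneg (z i))).mp h' i
    (Finset.mem_univ i)
  simpa using Complex.normSq_eq_zero.mp (this)

lemma vecMulVec_star_posSemidef (x : d → ℂ) : (vecMulVec x (star x)).PosSemidef := by
  rw [posSemidef_iff_dotProduct_mulVec]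
  constructor
  · ext i j
    simp [vecMulVec_apply, conjTranspose_apply, mul_comm]
  · intro z
    have hmv : (vecMulVec x (star x)) *ᵥ z = fun i => x i * (star x ⬝ᵥ z) := by
      funext i
      simp [mulVec, dotProduct, vecMulVec_apply, Finset.mul_sum, mul_assoc]
    rw [hmv]
    have hs : star (∑ i, star (x i) * z i) = ∑ i, star (z i) * x i := by
      rw [star_sum]
      refine Finset.sum_congr rfl fun i _ => ?_
      rw [star_mul', star_star]
      ring
    have : (star z) ⬝ᵥ (fun i => x i * (star x ⬝ᵥ z)) = star (star x ⬝ᵥ z) * (star x ⬝ᵥ z) := by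
      simp only [dotProduct, Pi.star_apply]
      rw [hs, Finset.sum_mul]
      refine Finset.sum_congr rfl fun i _ => ?_
      ring
    rw [this]
    exact star_mul_self_nonneg _

lemma sandwich (M : Matrix d d ℂ) (hM : Mᴴ = M) (x : d → ℂ) :
    M * vecMulVec x (star x) * M = vecMulVec (M *ᵥ x) (star (M *ᵥ x)) := by
  ext i j
  have hMb : ∀ b, M b j = star (M j b) := by
    intro b
    conv_lhs => rw [← hM]
    simp [conjTranspose_apply]
  have h1 : ∀ b, (∑ a, M i a * (x a * star (x b))) = (M *ᵥ x) i * star (x b) := by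
    intro b
    rw [mulVec, dotProduct, Finset.sum_mul]
    refine Finset.sum_congr rfl fun a _ => ?_
    ring
  have h2 : star ((M *ᵥ x) j) = ∑ b, star (x b) * M b j := by
    rw [mulVec, dotProduct, star_sum]
    refine Finset.sum_congr rfl fun b _ => ?_
    rw [star_mul', hMb b]
    ring
  have lhs : (M * vecMulVec x (star x) * M) i j = (M *ᵥ x) i * star ((M *ᵥ x) j) := by
    simp only [mul_apply, vecMulVec_apply, Pi.star_apply]
    calc ∑ b, (∑ a, M i a * (x a * star (x b))) * M b j
        = ∑ b, ((M *ᵥ x) i * star (x b)) * M b j := by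
          refine Finset.sum_congr rfl fun b _ => ?_
          rw [h1 b]
      _ = (M *ᵥ x) i * ∑ b, star (x b) * M b j := by
          rw [Finset.mul_sum]
          refine Finset.sum_congr rfl fun b _ => ?_
          ring
      _ = (M *ᵥ x) i * star ((M *ᵥ x) j) := by rw [h2]
  rw [lhs]
  simp [vecMulVec_apply]

lemma vecMulVec_add_star (x y : d → ℂ) :
    vecMulVec (x + y) (star (x + y)) = vecMulVec x (star x) + vecMulVec y (star y) +
      (vecMulVec x (star y) + vecMulVec y (star x)) := by
  ext i j
  simp [vecMulVec_apply]
  ring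

lemma vecMulVec_smulI_star (y : d → ℂ) :
    vecMulVec (Complex.I • y) (star (Complex.I • y)) = vecMulVec y (star y) := by
  ext i j
  simp [vecMulVec_apply, Complex.conj_I]
  ring_nf
  try simp [Complex.I_sq]
  try ring

lemma vecMulVec_addI_star (x y : d → ℂ) :
    vecMulVec (x + Complex.I • y) (star (x + Complex.I • y)) =
      vecMulVec x (star x) + vecMulVec y (star y) +
      ((-Complex.I) • vecMulVec x (star y) + Complex.I • vecMulVec y (star x)) := by
  ext i j
  simp [vecMulVec_apply, Complex.conj_I]
  ring_nf
  try simp [Complex.I_sq]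
  try ring

lemma trace_vecMulVec_star (x : d → ℂ) :
    (vecMulVec x (star x)).trace = ∑ i, star (x i) * x i := by
  simp [Matrix.trace, Matrix.diag, vecMulVec_apply, mul_comm]



section PT

variable {n m : Type} [Fintype n] [DecidableEq n] [Fintype m] [DecidableEq m]

lemma ptrace1_add (A B : Matrix (n × m) (n × m) ℂ) :
    ptrace1 (A + B) = ptrace1 A + ptrace1 B := by
  ext k l
  simp [ptrace1, Finset.sum_add_distrib]

lemma ptrace1_smul (c : ℂ) (A : Matrix (n × m) (n × m) ℂ) :
    ptrace1 (c • A) = c • ptrace1 A := by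
  ext k l
  simp [ptrace1, Finset.mul_sum]

lemma conj_outer_apply (U : Matrix (n × m) (n × m) ℂ) (x y : n × m → ℂ) (a b : n × m) :
    (U * vecMulVec x (star y) * Uᴴ) a b = (U *ᵥ x) a * star ((U *ᵥ y) b) := by
  have h1 : ∀ c, (∑ d, U a d * (x d * star (y c))) = (U *ᵥ x) a * star (y c) := by
    intro c
    rw [mulVec, dotProduct, Finset.sum_mul]
    refine Finset.sum_congr rfl fun d _ => ?_
    ring
  have h2 : star ((U *ᵥ y) b) = ∑ c, star (y c) * Uᴴ c b := by
    rw [mulVec, dotProduct, star_sum]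
    refine Finset.sum_congr rfl fun c _ => ?_
    rw [star_mul', conjTranspose_apply]
    ring
  simp only [mul_apply, vecMulVec_apply, Pi.star_apply]
  calc ∑ c, (∑ d, U a d * (x d * star (y c))) * Uᴴ c b
      = ∑ c, ((U *ᵥ x) a * star (y c)) * Uᴴ c b := by
        refine Finset.sum_congr rfl fun c _ => ?_
        rw [h1 c]
    _ = (U *ᵥ x) a * ∑ c, star (y c) * Uᴴ c b := by
        rw [Finset.mul_sum]
        refine Finset.sum_congr rfl fun c _ => ?_
        ring
    _ = (U *ᵥ x) a * star ((U *ᵥ y) b) := by rw [h2]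

lemma ptrace1_conj (U : Matrix (n × m) (n × m) ℂ) (x y : n × m → ℂ) :
    ptrace1 (U * vecMulVec x (star y) * Uᴴ)
      = Matrix.of fun k l => ∑ i, (U *ᵥ x) (i, k) * star ((U *ᵥ y) (i, l)) := by
  ext k l
  simp only [ptrace1, of_apply]
  exact Finset.sum_congr rfl fun i _ => conj_outer_apply U x y (i, k) (i, l)

lemma prod_sum_star (e : n → ℂ) (a : m → ℂ) (f : n → ℂ) (b : m → ℂ) :
    ∑ jc : n × m, star (e jc.1 * a jc.2) * (f jc.1 * b jc.2)
      = (∑ j, star (e j) * f j) * (∑ c, star (a c) * b c) := by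
  rw [Finset.sum_mul_sum, Fintype.sum_prod_type]
  refine Finset.sum_congr rfl fun j _ => Finset.sum_congr rfl fun c _ => ?_
  rw [star_mul']
  ring

lemma kron_mulVec (P : Matrix n n ℂ) (g : n → ℂ) (c0 : m → ℂ) :
    (P ⊗ₖ (1 : Matrix m m ℂ)) *ᵥ (fun jc => g jc.1 * c0 jc.2)
      = fun ik => (P *ᵥ g) ik.1 * c0 ik.2 := by
  funext ik
  obtain ⟨i, k⟩ := ik
  rw [mulVec, dotProduct, Fintype.sum_prod_type]
  have hinner : ∀ j, ∑ c, (P ⊗ₖ (1 : Matrix m m ℂ)) (i, k) (j, c) * (g j * c0 c)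
      = P i j * g j * c0 k := by
    intro j
    rw [Finset.sum_eq_single k]
    · simp [kroneckerMap_apply, one_apply]
      ring
    · intro c _ hc
      simp [kroneckerMap_apply, one_apply, Ne.symm hc]
    · intro h
      exact absurd (Finset.mem_univ k) h
  calc ∑ j, ∑ c, (P ⊗ₖ (1 : Matrix m m ℂ)) (i, k) (j, c) * (g j * c0 c)
      = ∑ j, P i j * g j * c0 k := Finset.sum_congr rfl fun j _ => hinner j
    _ = (P *ᵥ g) i * c0 k := by
        rw [mulVec, dotProduct, Finset.sum_mul]

lemma kron_one_herm (P : Matrix n n ℂ) (hP : Pᴴ = P) :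
    (P ⊗ₖ (1 : Matrix m m ℂ))ᴴ = P ⊗ₖ (1 : Matrix m m ℂ) := by
  ext ⟨i, k⟩ ⟨j, l⟩
  show star ((P ⊗ₖ (1 : Matrix m m ℂ)) (j, l) (i, k)) = _
  have hPji : star (P j i) = P i j := by
    conv_rhs => rw [← hP]
    simp [conjTranspose_apply]
  simp only [kroneckerMap_apply, star_mul', hPji]
  congr 1
  by_cases h : l = k
  · subst h
    simp [one_apply]
  · simp [one_apply, h, Ne.symm h]

end PT

end MCaux
section Cross

variable {n m : Type} [Fintype n] [DecidableEq n] [Fintype m] [DecidableEq m]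

lemma cross_zero (U : Matrix (n × m) (n × m) ℂ)
    (hMC : ∀ P : Matrix n n ℂ, P.IsHermitian → P * P = P → P.rank = 1 →
      ∀ ρ : Matrix (n × m) (n × m) ℂ, IsDensityMatrix ρ →
        ptrace1 (U * (P ⊗ₖ (1 : Matrix m m ℂ)) * ρ * (P ⊗ₖ (1 : Matrix m m ℂ)) * Uᴴ +
            U * ((1 - P) ⊗ₖ (1 : Matrix m m ℂ)) * ρ *
              ((1 - P) ⊗ₖ (1 : Matrix m m ℂ)) * Uᴴ)
          = ptrace1 (U * ρ * Uᴴ))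
    (e f : n → ℂ) (a b : m → ℂ)
    (he : ∑ i, star (e i) * e i = 1) (hf : ∑ i, star (f i) * f i = 1)
    (hef : ∑ i, star (e i) * f i = 0)
    (ha : ∑ k, star (a k) * a k = 1) (hb : ∑ k, star (b k) * b k = 1) :
    ∀ k l, ∑ i, (U *ᵥ fun jc => e jc.1 * a jc.2) (i, k) *
      star ((U *ᵥ fun jc => f jc.1 * b jc.2) (i, l)) = 0 := by
  classical
  set u : n × m → ℂ := fun jc => e jc.1 * a jc.2 with hu_def
  set v : n × m → ℂ := fun jc => f jc.1 * b jc.2 with hv_def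
  set P : Matrix n n ℂ := vecMulVec e (star e) with hP_def
  -- P is a rank-one Hermitian projection
  have hPH : Pᴴ = P := by
    ext i j
    simp [hP_def, vecMulVec_apply, conjTranspose_apply, mul_comm]
  have hPHerm : P.IsHermitian := hPH
  have hPe : P *ᵥ e = e := by
    funext i
    rw [mulVec, dotProduct]
    calc ∑ j, P i j * e j = e i * ∑ j, star (e j) * e j := by
          rw [Finset.mul_sum]
          refine Finset.sum_congr rfl fun j _ => ?_
          simp [hP_def, vecMulVec_apply]
          ring
      _ = e i := by rw [he, mul_one]
  have hPf : P *ᵥ f = 0 := by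
    funext i
    rw [mulVec, dotProduct]
    calc ∑ j, P i j * f j = e i * ∑ j, star (e j) * f j := by
          rw [Finset.mul_sum]
          refine Finset.sum_congr rfl fun j _ => ?_
          simp [hP_def, vecMulVec_apply]
          ring
      _ = 0 := by rw [hef, mul_zero]
  have hPP : P * P = P := by
    ext i j
    simp only [mul_apply, hP_def, vecMulVec_apply]
    calc ∑ x, e i * star (e x) * (e x * star (e j))
        = (e i * star (e j)) * ∑ x, star (e x) * e x := by
          rw [Finset.mul_sum]
          refine Finset.sum_congr rfl fun x _ => ?_
          ring
      _ = e i * star (e j) := by rw [he, mul_one]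
  have he_ne : e ≠ 0 := by
    intro h
    rw [h] at he
    simp at he
  have hPrank : P.rank = 1 := by
    have hle : P.rank ≤ 1 := by
      calc P.rank = (replicateCol (Fin 1) e * replicateRow (Fin 1) (star e)).rank := by
            rw [hP_def, vecMulVec_eq (Fin 1)]
            rfl
        _ ≤ (replicateCol (Fin 1) e).rank := rank_mul_le_left _ _
        _ ≤ Fintype.card (Fin 1) := rank_le_card_width _
        _ = 1 := by simp
    have hne : P.rank ≠ 0 := by
      intro h0
      rw [Matrix.rank] at h0
      have hrange : LinearMap.range P.mulVecLin = ⊥ := Submodule.finrank_eq_zero.mp h0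
      have hmem : e ∈ LinearMap.range P.mulVecLin := ⟨e, by simpa [Matrix.mulVecLin_apply] using hPe⟩
      rw [hrange] at hmem
      exact he_ne (by simpa using hmem)
    omega
  set Q : Matrix (n × m) (n × m) ℂ := P ⊗ₖ (1 : Matrix m m ℂ) with hQ_def
  set Q' : Matrix (n × m) (n × m) ℂ := (1 - P) ⊗ₖ (1 : Matrix m m ℂ) with hQ'_def
  have hQH : Qᴴ = Q := MCaux.kron_one_herm P hPH
  have hQ'H : Q'ᴴ = Q' := by
    refine MCaux.kron_one_herm (1 - P) ?_
    rw [conjTranspose_sub, conjTranspose_one, hPH]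
  have hQu : Q *ᵥ u = u := by
    rw [hu_def, hQ_def, MCaux.kron_mulVec, hPe]
  have hQv : Q' *ᵥ v = v := by
    rw [hv_def, hQ'_def, MCaux.kron_mulVec]
    funext ik
    rw [Matrix.sub_mulVec, Matrix.one_mulVec, hPf]
    simp
  have hQv0 : Q *ᵥ v = 0 := by
    rw [hv_def, hQ_def, MCaux.kron_mulVec, hPf]
    funext ik
    simp
  have hQ'u0 : Q' *ᵥ u = 0 := by
    rw [hu_def, hQ'_def, MCaux.kron_mulVec]
    funext ik
    rw [Matrix.sub_mulVec, Matrix.one_mulVec, hPe]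
    simp
  -- norms of u, v
  have hu_norm : ∑ jc, star (u jc) * u jc = 1 := by
    rw [hu_def]
    rw [MCaux.prod_sum_star e a e a, he, ha, one_mul]
  have hv_norm : ∑ jc, star (v jc) * v jc = 1 := by
    rw [hv_def]
    rw [MCaux.prod_sum_star f b f b, hf, hb, one_mul]
  have huv : ∑ jc, star (u jc) * v jc = 0 := by
    rw [hu_def, hv_def, MCaux.prod_sum_star e a f b, hef, zero_mul]
  have hvu : ∑ jc, star (v jc) * u jc = 0 := by
    have : ∑ jc, star (v jc) * u jc = star (∑ jc, star (u jc) * v jc) := by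
      rw [star_sum]
      refine Finset.sum_congr rfl fun jc _ => ?_
      simp only [star_mul', star_star]
      ring
    rw [this, huv, star_zero]
  -- generic density matrix construction
  have hdens : ∀ x : n × m → ℂ, (∑ jc, star (x jc) * x jc = 2) →
      IsDensityMatrix ((2 : ℂ)⁻¹ • vecMulVec x (star x)) := by
    intro x hx
    constructor
    · rw [posSemidef_iff_dotProduct_mulVec]
      constructor
      · show ((2 : ℂ)⁻¹ • vecMulVec x (star x))ᴴ = _
        rw [conjTranspose_smul]
        have : star ((2 : ℂ)⁻¹) = (2 : ℂ)⁻¹ := by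
          norm_num
        rw [this]
        congr 1
        exact (MCaux.vecMulVec_star_posSemidef x).1
      · intro z
        rw [Matrix.smul_mulVec]
        have hd : star z ⬝ᵥ (2 : ℂ)⁻¹ • (vecMulVec x (star x) *ᵥ z)
            = (2 : ℂ)⁻¹ * (star z ⬝ᵥ (vecMulVec x (star x) *ᵥ z)) := by
          rw [dotProduct_smul]
          simp
        rw [hd]
        have h2 : (0 : ℂ) ≤ (2 : ℂ)⁻¹ := by
          rw [show ((2 : ℂ)⁻¹ = ((2⁻¹ : ℝ) : ℂ)) by push_cast; ring]
          rw [Complex.zero_le_real]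
          norm_num
        exact mul_nonneg h2 ((posSemidef_iff_dotProduct_mulVec.mp (MCaux.vecMulVec_star_posSemidef x)).2 z)
    · rw [Matrix.trace_smul, MCaux.trace_vecMulVec_star, hx]
      simp
  -- sandwich computation
  have hsand : ∀ (R : Matrix (n × m) (n × m) ℂ), Rᴴ = R → ∀ x : n × m → ℂ,
      U * R * ((2 : ℂ)⁻¹ • vecMulVec x (star x)) * R * Uᴴ
        = (2 : ℂ)⁻¹ • (U * vecMulVec (R *ᵥ x) (star (R *ᵥ x)) * Uᴴ) := by
    intro R hR x
    rw [Matrix.mul_smul, Matrix.smul_mul, Matrix.smul_mul]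
    congr 1
    calc U * R * vecMulVec x (star x) * R * Uᴴ
        = U * (R * vecMulVec x (star x) * R) * Uᴴ := by
          simp only [Matrix.mul_assoc]
      _ = U * vecMulVec (R *ᵥ x) (star (R *ᵥ x)) * Uᴴ := by
          rw [MCaux.sandwich R hR x]
  -- apply MC to ρ₁ = 1/2 |u+v><u+v|
  have hx1 : ∑ jc, star ((u + v) jc) * (u + v) jc = 2 := by
    have : ∀ jc, star ((u + v) jc) * (u + v) jc
        = star (u jc) * u jc + star (v jc) * v jc + (star (u jc) * v jc + star (v jc) * u jc) := by
      intro jc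
      simp only [Pi.add_apply, star_add]
      ring
    rw [Finset.sum_congr rfl fun jc _ => this jc]
    rw [Finset.sum_add_distrib, Finset.sum_add_distrib, Finset.sum_add_distrib,
      hu_norm, hv_norm, huv, hvu]
    norm_num
  have hMC1 := hMC P hPHerm hPP hPrank ((2 : ℂ)⁻¹ • vecMulVec (u + v) (star (u + v)))
    (hdens (u + v) hx1)
  have hQuv : Q *ᵥ (u + v) = u := by rw [Matrix.mulVec_add, hQu, hQv0]; simp
  have hQ'uv : Q' *ᵥ (u + v) = v := by rw [Matrix.mulVec_add, hQv, hQ'u0]; simp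
  rw [← hQ_def, ← hQ'_def] at hMC1
  rw [hsand Q hQH (u + v), hsand Q' hQ'H (u + v), hQuv, hQ'uv] at hMC1
  rw [← smul_add, MCaux.ptrace1_smul] at hMC1
  have hsplit : U * ((2 : ℂ)⁻¹ • vecMulVec (u + v) (star (u + v))) * Uᴴ
      = (2 : ℂ)⁻¹ • (U * vecMulVec u (star u) * Uᴴ + U * vecMulVec v (star v) * Uᴴ +
        (U * vecMulVec u (star v) * Uᴴ + U * vecMulVec v (star u) * Uᴴ)) := by
    rw [Matrix.mul_smul, Matrix.smul_mul]
    congr 1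
    rw [MCaux.vecMulVec_add_star]
    simp only [Matrix.mul_add, Matrix.add_mul]
  rw [hsplit, MCaux.ptrace1_smul] at hMC1
  have hinj2 : Function.Injective (fun (M : Matrix m m ℂ) => (2 : ℂ)⁻¹ • M) :=
    smul_right_injective _ (by norm_num)
  have E1 := hinj2 hMC1
  rw [MCaux.ptrace1_add, MCaux.ptrace1_add, MCaux.ptrace1_add, MCaux.ptrace1_add] at E1
  have hAB : ptrace1 (U * vecMulVec u (star v) * Uᴴ) + ptrace1 (U * vecMulVec v (star u) * Uᴴ) = 0 := by
    have h := E1.symm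
    rwa [add_eq_left] at h
  -- apply MC to ρ₂ = 1/2 |u+iv><u+iv|
  have hx2 : ∑ jc, star ((u + Complex.I • v) jc) * (u + Complex.I • v) jc = 2 := by
    have : ∀ jc, star ((u + Complex.I • v) jc) * (u + Complex.I • v) jc
        = star (u jc) * u jc + star (v jc) * v jc
          + (Complex.I * (star (u jc) * v jc) + (-Complex.I) * (star (v jc) * u jc)) := by
      intro jc
      simp only [Pi.add_apply, Pi.smul_apply, smul_eq_mul, star_add, star_mul', Complex.star_def,
        Complex.conj_I]
      ring_nf
      rw [Complex.I_sq]
      ring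
    rw [Finset.sum_congr rfl fun jc _ => this jc]
    rw [Finset.sum_add_distrib, Finset.sum_add_distrib, Finset.sum_add_distrib,
      hu_norm, hv_norm, ← Finset.mul_sum, ← Finset.mul_sum, huv, hvu]
    norm_num
  have hMC2 := hMC P hPHerm hPP hPrank
    ((2 : ℂ)⁻¹ • vecMulVec (u + Complex.I • v) (star (u + Complex.I • v)))
    (hdens (u + Complex.I • v) hx2)
  have hQx2 : Q *ᵥ (u + Complex.I • v) = u := by
    rw [Matrix.mulVec_add, Matrix.mulVec_smul, hQu, hQv0]
    simp
  have hQ'x2 : Q' *ᵥ (u + Complex.I • v) = Complex.I • v := by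
    rw [Matrix.mulVec_add, Matrix.mulVec_smul, hQv, hQ'u0]
    simp
  rw [← hQ_def, ← hQ'_def] at hMC2
  rw [hsand Q hQH _, hsand Q' hQ'H _, hQx2, hQ'x2] at hMC2
  rw [MCaux.vecMulVec_smulI_star] at hMC2
  rw [← smul_add, MCaux.ptrace1_smul] at hMC2
  have hsplit2 : U * ((2 : ℂ)⁻¹ • vecMulVec (u + Complex.I • v) (star (u + Complex.I • v))) * Uᴴ
      = (2 : ℂ)⁻¹ • (U * vecMulVec u (star u) * Uᴴ + U * vecMulVec v (star v) * Uᴴ +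
        ((-Complex.I) • (U * vecMulVec u (star v) * Uᴴ) + Complex.I • (U * vecMulVec v (star u) * Uᴴ))) := by
    rw [Matrix.mul_smul, Matrix.smul_mul]
    congr 1
    rw [MCaux.vecMulVec_addI_star]
    simp only [Matrix.mul_add, Matrix.add_mul, Matrix.mul_smul, Matrix.smul_mul]
  rw [hsplit2, MCaux.ptrace1_smul] at hMC2
  have E2 := hinj2 hMC2
  rw [MCaux.ptrace1_add, MCaux.ptrace1_add, MCaux.ptrace1_add, MCaux.ptrace1_add,
    MCaux.ptrace1_smul, MCaux.ptrace1_smul] at E2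
  have hAB2 : (-Complex.I) • ptrace1 (U * vecMulVec u (star v) * Uᴴ)
      + Complex.I • ptrace1 (U * vecMulVec v (star u) * Uᴴ) = 0 := by
    have h := E2.symm
    rwa [add_eq_left] at h
  -- combine
  have hfinal : ptrace1 (U * vecMulVec u (star v) * Uᴴ) = 0 := by
    set A := ptrace1 (U * vecMulVec u (star v) * Uᴴ)
    set B := ptrace1 (U * vecMulVec v (star u) * Uᴴ)
    have hBeqA : B = A := by
      have h1 : Complex.I • B = Complex.I • A := by
        have : (-Complex.I) • A + Complex.I • B = 0 := hAB2
        rw [neg_smul] at this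
        linear_combination (norm := module) this
      have hinj : Function.Injective (fun (M : Matrix m m ℂ) => Complex.I • M) :=
        smul_right_injective _ Complex.I_ne_zero
      exact hinj h1
    rw [hBeqA] at hAB
    have h2 : (2 : ℂ) • A = 0 := by
      rw [two_smul]
      exact hAB
    have := smul_eq_zero.mp h2
    rcases this with h | h
    · norm_num at h
    · exact h
  rw [MCaux.ptrace1_conj] at hfinal
  intro k l
  have h := Matrix.ext_iff.mpr hfinal k l
  simpa using h

end Cross
section Struct

variable {n m : Type} [Fintype n] [DecidableEq n] [Fintype m] [DecidableEq m]

/-- The consequence of the no-signalling condition used in the proof. -/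
def CrossProp (U : Matrix (n × m) (n × m) ℂ) : Prop :=
  ∀ (e f : n → ℂ) (a b : m → ℂ),
    (∑ i, star (e i) * e i = 1) → (∑ i, star (f i) * f i = 1) →
    (∑ i, star (e i) * f i = 0) →
    (∑ k, star (a k) * a k = 1) → (∑ k, star (b k) * b k = 1) →
    ∀ k l, ∑ i, (U *ᵥ fun jc => e jc.1 * a jc.2) (i, k) *
      star ((U *ᵥ fun jc => f jc.1 * b jc.2) (i, l)) = 0

lemma delta_norm (p : n) :
    ∑ j, star (if j = p then (1 : ℂ) else 0) * (if j = p then (1 : ℂ) else 0) = 1 := by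
  rw [Finset.sum_eq_single p]
  · simp
  · intro j _ hj
    simp [hj]
  · intro h
    exact absurd (Finset.mem_univ p) h

lemma delta_orth {p q : n} (h : p ≠ q) :
    ∑ j, star (if j = p then (1 : ℂ) else 0) * (if j = q then (1 : ℂ) else 0) = 0 := by
  apply Finset.sum_eq_zero
  intro j _
  by_cases hp : j = p
  · subst hp
    simp [h]
  · simp [hp]

lemma mulVec_delta (U : Matrix (n × m) (n × m) ℂ) (p : n) (l : m) :
    (U *ᵥ fun jc : n × m => (if jc.1 = p then (1 : ℂ) else 0) * (if jc.2 = l then 1 else 0))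
      = fun ik => U ik (p, l) := by
  funext ik
  rw [mulVec, dotProduct, Fintype.sum_prod_type]
  rw [Finset.sum_eq_single p]
  · rw [Finset.sum_eq_single l]
    · simp
    · intro c _ hc
      simp [hc]
    · intro h
      exact absurd (Finset.mem_univ l) h
  · intro j _ hj
    apply Finset.sum_eq_zero
    intro c _
    simp [hj]
  · intro h
    exact absurd (Finset.mem_univ p) h

lemma factA (U : Matrix (n × m) (n × m) ℂ) (hcross : CrossProp U) {p q : n} (hpq : p ≠ q)
    (k l k' l' : m) : ∑ i, U (i, k) (p, l) * star (U (i, k') (q, l')) = 0 := by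
  have h := hcross (fun j => if j = p then 1 else 0) (fun j => if j = q then 1 else 0)
    (fun c => if c = l then 1 else 0) (fun c => if c = l' then 1 else 0)
    (delta_norm p) (delta_norm q) (delta_orth hpq) (delta_norm l) (delta_norm l') k k'
  rw [mulVec_delta, mulVec_delta] at h
  exact h

lemma factC (U : Matrix (n × m) (n × m) ℂ) (hcross : CrossProp U) {p q : n} (hpq : p ≠ q)
    (k l k' l' : m) :
    ∑ i, U (i, k) (p, l) * star (U (i, k') (p, l'))
      = ∑ i, U (i, k) (q, l) * star (U (i, k') (q, l')) := by
  set c0 : ℂ := Complex.ofReal ((Real.sqrt 2)⁻¹) with hc0_def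
  have hc0_star : star c0 = c0 := by
    rw [hc0_def]
    exact Complex.conj_ofReal _
  have hc0_ne : c0 ≠ 0 := by
    rw [hc0_def]
    simp only [ne_eq, Complex.ofReal_eq_zero, inv_eq_zero]
    positivity
  have hc2 : c0 * c0 * 2 = 1 := by
    have hr : ((Real.sqrt 2)⁻¹ * (Real.sqrt 2)⁻¹ * 2 : ℝ) = 1 := by
      rw [← mul_inv, Real.mul_self_sqrt (by norm_num : (0:ℝ) ≤ 2)]
      norm_num
    rw [hc0_def]
    exact_mod_cast hr
  set dp : n → ℂ := fun j => if j = p then 1 else 0 with hdp_def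
  set dq : n → ℂ := fun j => if j = q then 1 else 0 with hdq_def
  set e : n → ℂ := fun j => c0 * (dp j + dq j) with he_def
  set f : n → ℂ := fun j => c0 * (dp j - dq j) with hf_def
  have hcomb : ∀ (s t : ℂ), ∑ j, star (c0 * (dp j + s * dq j)) * (c0 * (dp j + t * dq j))
      = c0 * c0 * (1 + star s * t) := by
    intro s t
    have hterm : ∀ j, star (c0 * (dp j + s * dq j)) * (c0 * (dp j + t * dq j))
        = (c0 * c0) * (star (dp j) * dp j + star s * t * (star (dq j) * dq j)
            + (t * (star (dp j) * dq j) + star s * (star (dq j) * dp j))) := by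
      intro j
      simp only [star_mul', star_add, hc0_star]
      ring
    rw [Finset.sum_congr rfl fun j _ => hterm j, ← Finset.mul_sum]
    congr 1
    rw [Finset.sum_add_distrib, Finset.sum_add_distrib, Finset.sum_add_distrib,
      ← Finset.mul_sum, ← Finset.mul_sum, ← Finset.mul_sum,
      delta_norm p, delta_norm q, delta_orth hpq, delta_orth hpq.symm]
    ring
  have hnorm_e : ∑ j, star (e j) * e j = 1 := by
    calc ∑ j, star (e j) * e j
        = ∑ j, star (c0 * (dp j + (1:ℂ) * dq j)) * (c0 * (dp j + (1:ℂ) * dq j)) := by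
          refine Finset.sum_congr rfl fun j _ => ?_
          simp only [he_def, one_mul]
      _ = c0 * c0 * (1 + star (1:ℂ) * 1) := hcomb 1 1
      _ = 1 := by rw [star_one]; linear_combination hc2
  have hnorm_f : ∑ j, star (f j) * f j = 1 := by
    calc ∑ j, star (f j) * f j
        = ∑ j, star (c0 * (dp j + (-1) * dq j)) * (c0 * (dp j + (-1) * dq j)) := by
          refine Finset.sum_congr rfl fun j _ => ?_
          simp only [hf_def, neg_one_mul, ← sub_eq_add_neg]
      _ = c0 * c0 * (1 + star (-1:ℂ) * (-1)) := hcomb (-1) (-1)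
      _ = 1 := by simp only [star_neg, star_one]; linear_combination hc2
  have horth_ef : ∑ j, star (e j) * f j = 0 := by
    calc ∑ j, star (e j) * f j
        = ∑ j, star (c0 * (dp j + (1:ℂ) * dq j)) * (c0 * (dp j + (-1) * dq j)) := by
          refine Finset.sum_congr rfl fun j _ => ?_
          simp only [he_def, hf_def, one_mul, neg_one_mul, ← sub_eq_add_neg]
      _ = c0 * c0 * (1 + star (1:ℂ) * (-1)) := hcomb 1 (-1)
      _ = 0 := by simp
  have h := hcross e f (fun c => if c = l then 1 else 0) (fun c => if c = l' then 1 else 0)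
    hnorm_e hnorm_f horth_ef (delta_norm l) (delta_norm l') k k'
  -- rewrite the mulVecs
  have hue : (fun jc : n × m => e jc.1 * (if jc.2 = l then (1:ℂ) else 0))
      = c0 • ((fun jc : n × m => dp jc.1 * (if jc.2 = l then (1:ℂ) else 0))
        + fun jc : n × m => dq jc.1 * (if jc.2 = l then (1:ℂ) else 0)) := by
    funext jc
    simp only [he_def, Pi.smul_apply, Pi.add_apply, smul_eq_mul]
    ring
  have huf : (fun jc : n × m => f jc.1 * (if jc.2 = l' then (1:ℂ) else 0))
      = c0 • ((fun jc : n × m => dp jc.1 * (if jc.2 = l' then (1:ℂ) else 0))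
        - fun jc : n × m => dq jc.1 * (if jc.2 = l' then (1:ℂ) else 0)) := by
    funext jc
    simp only [hf_def, Pi.smul_apply, Pi.sub_apply, smul_eq_mul]
    ring
  rw [hue, huf, Matrix.mulVec_smul, Matrix.mulVec_smul, Matrix.mulVec_add, Matrix.mulVec_sub] at h
  rw [hdp_def, hdq_def, mulVec_delta, mulVec_delta, mulVec_delta, mulVec_delta] at h
  have hterm : ∀ i, (c0 • ((fun ik : n × m => U ik (p, l)) + fun ik : n × m => U ik (q, l))) (i, k)
      * star ((c0 • ((fun ik : n × m => U ik (p, l')) - fun ik : n × m => U ik (q, l'))) (i, k'))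
      = (c0 * c0) * (U (i, k) (p, l) * star (U (i, k') (p, l'))
          - U (i, k) (p, l) * star (U (i, k') (q, l'))
          + U (i, k) (q, l) * star (U (i, k') (p, l'))
          - U (i, k) (q, l) * star (U (i, k') (q, l'))) := by
    intro i
    simp only [Pi.smul_apply, Pi.add_apply, Pi.sub_apply, smul_eq_mul, star_mul', star_sub,
      hc0_star]
    ring
  rw [Finset.sum_congr rfl fun i _ => hterm i, ← Finset.mul_sum] at h
  have hbr : ∑ i, (U (i, k) (p, l) * star (U (i, k') (p, l'))
      - U (i, k) (p, l) * star (U (i, k') (q, l'))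
      + U (i, k) (q, l) * star (U (i, k') (p, l'))
      - U (i, k) (q, l) * star (U (i, k') (q, l'))) = 0 := by
    rcases mul_eq_zero.mp h with h' | h'
    · exact absurd h' (mul_ne_zero hc0_ne hc0_ne)
    · exact h'
  have hexp : ∑ i, (U (i, k) (p, l) * star (U (i, k') (p, l'))
      - U (i, k) (p, l) * star (U (i, k') (q, l'))
      + U (i, k) (q, l) * star (U (i, k') (p, l'))
      - U (i, k) (q, l) * star (U (i, k') (q, l')))
      = ∑ i, U (i, k) (p, l) * star (U (i, k') (p, l'))
        - ∑ i, U (i, k) (p, l) * star (U (i, k') (q, l'))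
        + ∑ i, U (i, k) (q, l) * star (U (i, k') (p, l'))
        - ∑ i, U (i, k) (q, l) * star (U (i, k') (q, l')) := by
    rw [Finset.sum_sub_distrib, Finset.sum_add_distrib, Finset.sum_sub_distrib]
  rw [hexp, factA U hcross hpq k l k' l', factA U hcross hpq.symm k l k' l'] at hbr
  linear_combination hbr

end Struct
section Final

variable {n m : Type} [Fintype n] [DecidableEq n] [Fintype m] [DecidableEq m]

lemma factB (U : Matrix (n × m) (n × m) ℂ) (hUU : Uᴴ * U = 1) (a b : n × m) :
    ∑ c, star (U c a) * U c b = if a = b then 1 else 0 := by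
  have h := Matrix.ext_iff.mpr hUU a b
  rw [Matrix.mul_apply] at h
  simpa [conjTranspose_apply, one_apply] using h

end Final


/-- Strengthened factorization theorem: it suffices that the no-signalling condition (MC)
holds for all two-outcome measurements `{P, 1 − P}` with `P` a rank-one projection. -/
theorem MC_rank_one_implies_factorization
    (n m : Type) [Fintype n] [DecidableEq n] [Fintype m] [DecidableEq m]
    (U : Matrix (n × m) (n × m) ℂ) (hU : U ∈ Matrix.unitaryGroup (n × m) ℂ)
    (hMC : ∀ P : Matrix n n ℂ, P.IsHermitian → P * P = P → P.rank = 1 →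
      ∀ ρ : Matrix (n × m) (n × m) ℂ, IsDensityMatrix ρ →
        ptrace1 (U * (P ⊗ₖ (1 : Matrix m m ℂ)) * ρ * (P ⊗ₖ (1 : Matrix m m ℂ)) * Uᴴ +
            U * ((1 - P) ⊗ₖ (1 : Matrix m m ℂ)) * ρ *
              ((1 - P) ⊗ₖ (1 : Matrix m m ℂ)) * Uᴴ)
          = ptrace1 (U * ρ * Uᴴ)) :
    ∃ U₁ U₂, U₁ ∈ Matrix.unitaryGroup n ℂ ∧ U₂ ∈ Matrix.unitaryGroup m ℂ ∧
      U = U₁ ⊗ₖ U₂ := by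
  classical
  rcases isEmpty_or_nonempty n with hn | hn
  · refine ⟨1, 1, one_mem _, one_mem _, ?_⟩
    ext ik jl
    exact hn.elim ik.1
  rcases isEmpty_or_nonempty m with hm | hm
  · refine ⟨1, 1, one_mem _, one_mem _, ?_⟩
    ext ik jl
    exact hm.elim ik.2
  have hUU : Uᴴ * U = 1 := by
    have := (Unitary.mem_iff.mp hU).1
    rwa [Matrix.star_eq_conjTranspose] at this
  have hcross : CrossProp U := fun e f a b he hf hef ha hb => cross_zero U hMC e f a b he hf hef ha hb
  have fA : ∀ {p q : n}, p ≠ q → ∀ (k l k' l' : m),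
      ∑ i, U (i, k) (p, l) * star (U (i, k') (q, l')) = 0 := fun h => factA U hcross h
  have fC : ∀ {p q : n}, p ≠ q → ∀ (k l k' l' : m),
      ∑ i, U (i, k) (p, l) * star (U (i, k') (p, l'))
        = ∑ i, U (i, k) (q, l) * star (U (i, k') (q, l')) := fun h => factC U hcross h
  -- each "column block" has a nonzero column
  have hex : ∀ p : n, ∃ kl : m × m, (fun i => U (i, kl.1) (p, kl.2)) ≠ 0 := by
    intro p
    by_contra hcon
    push_neg at hcon
    obtain ⟨l0⟩ := hm
    have hB := factB U hUU (p, l0) (p, l0)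
    rw [if_pos rfl] at hB
    rw [Finset.sum_eq_zero] at hB
    · exact zero_ne_one hB
    · intro c _
      have hz : U (c.1, c.2) (p, l0) = 0 := congrFun (hcon (c.2, l0)) c.1
      have hz' : U c (p, l0) = 0 := hz
      rw [hz', mul_zero]
  choose kl hkl using hex
  set up : n → n → ℂ := fun p i => U (i, (kl p).1) (p, (kl p).2) with hup_def
  have hup_ne : ∀ p, up p ≠ 0 := hkl
  have norm_sum : ∀ (z : n → ℂ), ∑ i, star (z i) * z i
      = ((∑ i, Complex.normSq (z i) : ℝ) : ℂ) := by
    intro z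
    push_cast
    refine Finset.sum_congr rfl fun i _ => ?_
    rw [Complex.star_def, mul_comm, Complex.mul_conj]
  set np : n → ℝ := fun p => ∑ i, Complex.normSq (up p i) with hnp_def
  have hnp_pos : ∀ p, 0 < np p := by
    intro p
    have hnn : (0 : ℝ) ≤ np p := Finset.sum_nonneg fun i _ => Complex.normSq_nonneg _
    rcases hnn.lt_or_eq with h | h
    · exact h
    · exfalso
      apply hup_ne p
      funext i
      have hz := (Finset.sum_eq_zero_iff_of_nonneg
        (fun i _ => Complex.normSq_nonneg (up p i))).mp h.symm i (Finset.mem_univ i)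
      simpa using Complex.normSq_eq_zero.mp hz
  have hnp_ne : ∀ p, (np p : ℂ) ≠ 0 := by
    intro p
    exact_mod_cast (hnp_pos p).ne'
  have horst : ∀ {p q : n}, p ≠ q → ∑ i, star (up p i) * up q i = 0 := by
    intro p q h
    calc ∑ i, star (up p i) * up q i
        = star (∑ i, up p i * star (up q i)) := by
          rw [star_sum]
          refine Finset.sum_congr rfl fun i _ => ?_
          simp only [star_mul', star_star]
          try ring
      _ = 0 := by
          rw [hup_def]
          simp only []
          rw [fA h (kl p).1 (kl p).2 (kl q).1 (kl q).2, star_zero]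
  have pairing : ∀ (g : n → ℂ) (q : n),
      ∑ i, star (up q i) * (∑ p, g p • up p) i = g q * (np q : ℂ) := by
    intro g q
    have h1 : ∀ i, star (up q i) * (∑ p, g p • up p) i
        = ∑ p, g p * (star (up q i) * up p i) := by
      intro i
      simp only [Finset.sum_apply, Pi.smul_apply, smul_eq_mul, Finset.mul_sum]
      refine Finset.sum_congr rfl fun p _ => by ring
    rw [Finset.sum_congr rfl fun i _ => h1 i, Finset.sum_comm]
    have h2 : ∀ p, ∑ i, g p * (star (up q i) * up p i)
        = g p * ∑ i, star (up q i) * up p i := by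
      intro p
      rw [Finset.mul_sum]
    rw [Finset.sum_congr rfl fun p _ => h2 p]
    rw [Finset.sum_eq_single q]
    · congr 1
      rw [norm_sum]
    · intro p _ hp
      rw [horst (Ne.symm hp), mul_zero]
    · intro h
      exact absurd (Finset.mem_univ q) h
  have li : LinearIndependent ℂ up := by
    rw [Fintype.linearIndependent_iff]
    intro g hg q
    have h0 : ∑ i, star (up q i) * (∑ p, g p • up p) i = 0 := by
      rw [hg]
      simp
    rw [pairing g q] at h0
    rcases mul_eq_zero.mp h0 with h | h
    · exact h
    · exact absurd h (hnp_ne q)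
  have hcard : Fintype.card n = Module.finrank ℂ (n → ℂ) :=
    (Module.finrank_fintype_fun_eq_card ℂ).symm
  set bas := basisOfLinearIndependentOfCardEqFinrank li hcard with hbas_def
  have hbas : ∀ p, bas p = up p := fun p =>
    congrFun (coe_basisOfLinearIndependentOfCardEqFinrank li hcard) p
  have span1 : ∀ (p : n) (x : n → ℂ), (∀ q, q ≠ p → ∑ i, star (up q i) * x i = 0) →
      ∃ c : ℂ, x = c • up p := by
    intro p x hx
    refine ⟨bas.repr x p, ?_⟩
    have hsum : ∑ r, bas.repr x r • up r = x := by
      conv_rhs => rw [← bas.sum_repr x]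
      exact Finset.sum_congr rfl fun r _ => by rw [hbas r]
    have hzero : ∀ q, q ≠ p → bas.repr x q = 0 := by
      intro q hq
      have h1 : (bas.repr x) q * (np q : ℂ) = 0 := by
        rw [← pairing (fun r => (bas.repr x) r) q]
        rw [hsum]
        exact hx q hq
      rcases mul_eq_zero.mp h1 with h | h
      · exact h
      · exact absurd h (hnp_ne q)
    calc x = ∑ r, bas.repr x r • up r := hsum.symm
      _ = bas.repr x p • up p :=
          Finset.sum_eq_single p (fun r _ hr => by rw [hzero r hr, zero_smul])
            (fun h => absurd (Finset.mem_univ p) h)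
  have hcol : ∀ (p : n) (k l : m), ∃ c : ℂ, (fun i => U (i, k) (p, l)) = c • up p := by
    intro p k l
    apply span1
    intro q hq
    calc ∑ i, star (up q i) * U (i, k) (p, l)
        = star (∑ i, up q i * star (U (i, k) (p, l))) := by
          rw [star_sum]
          refine Finset.sum_congr rfl fun i _ => ?_
          simp only [star_mul', star_star]
          try ring
      _ = 0 := by
          rw [hup_def]
          simp only []
          rw [fA hq (kl q).1 (kl q).2 k l, star_zero]
  choose cc hcc using hcol
  have hrep0 : ∀ p k l i, U (i, k) (p, l) = cc p k l * up p i := by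
    intro p k l i
    have := congrFun (hcc p k l) i
    simpa using this
  set tp : n → ℝ := fun p => Real.sqrt (np p) with htp_def
  have htp_pos : ∀ p, 0 < tp p := fun p => Real.sqrt_pos.mpr (hnp_pos p)
  have htp_sq : ∀ p, tp p * tp p = np p := fun p => Real.mul_self_sqrt (hnp_pos p).le
  set wv : n → n → ℂ := fun p i => (((tp p)⁻¹ : ℝ) : ℂ) * up p i with hwv_def
  set B : n → m → m → ℂ := fun p k l => ((tp p : ℝ) : ℂ) * cc p k l with hB_def
  have htp_cancel : ∀ p, (((tp p)⁻¹ : ℝ) : ℂ) * ((tp p : ℝ) : ℂ) = 1 := by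
    intro p
    rw [← Complex.ofReal_mul, inv_mul_cancel₀ (htp_pos p).ne']
    simp
  have hrep : ∀ p k l i, U (i, k) (p, l) = wv p i * B p k l := by
    intro p k l i
    rw [hrep0 p k l i, hwv_def, hB_def]
    simp only []
    linear_combination (-(cc p k l * up p i)) * htp_cancel p
  have hwv_orth : ∀ p q, ∑ i, star (wv p i) * wv q i = if p = q then 1 else 0 := by
    intro p q
    by_cases h : p = q
    · subst h
      rw [if_pos rfl]
      have hterm : ∀ i, star (wv p i) * wv p i
          = ((((tp p)⁻¹ : ℝ) : ℂ) * (((tp p)⁻¹ : ℝ) : ℂ)) * (star (up p i) * up p i) := by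
        intro i
        simp only [hwv_def, star_mul', Complex.star_def, Complex.conj_ofReal]
        ring
      rw [Finset.sum_congr rfl fun i _ => hterm i, ← Finset.mul_sum, norm_sum]
      have hr : ((tp p)⁻¹ * (tp p)⁻¹ * np p : ℝ) = 1 := by
        rw [← mul_inv, htp_sq p, inv_mul_cancel₀ (hnp_pos p).ne']
      push_cast
      exact_mod_cast congrArg (Complex.ofReal) hr
    · rw [if_neg h]
      have hterm : ∀ i, star (wv p i) * wv q i
          = ((((tp p)⁻¹ : ℝ) : ℂ) * (((tp q)⁻¹ : ℝ) : ℂ)) * (star (up p i) * up q i) := by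
        intro i
        simp only [hwv_def, star_mul', Complex.star_def, Complex.conj_ofReal]
        ring
      rw [Finset.sum_congr rfl fun i _ => hterm i, ← Finset.mul_sum, horst h, mul_zero]
  have hself : ∀ p k l k' l', ∑ i, U (i, k) (p, l) * star (U (i, k') (p, l'))
      = B p k l * star (B p k' l') := by
    intro p k l k' l'
    have hterm : ∀ i, U (i, k) (p, l) * star (U (i, k') (p, l'))
        = (B p k l * star (B p k' l')) * (star (wv p i) * wv p i) := by
      intro i
      rw [hrep p k l i, hrep p k' l' i]
      simp only [star_mul', star_star]
      ring
    rw [Finset.sum_congr rfl fun i _ => hterm i, ← Finset.mul_sum, hwv_orth p p, if_pos rfl,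
      mul_one]
  have hBrel : ∀ {p q : n}, p ≠ q → ∀ k l k' l',
      B p k l * star (B p k' l') = B q k l * star (B q k' l') := by
    intro p q h k l k' l'
    rw [← hself p k l k' l', ← hself q k l k' l']
    exact fC h k l k' l'
  have hBun : ∀ p l l', ∑ k0, star (B p k0 l) * B p k0 l' = if l = l' then 1 else 0 := by
    intro p l l'
    have hB2 := factB U hUU (p, l) (p, l')
    have h1 : ∑ c : n × m, star (U c (p, l)) * U c (p, l')
        = (∑ i, star (wv p i) * wv p i) * (∑ k0, star (B p k0 l) * B p k0 l') := by
      rw [Finset.sum_mul_sum, Fintype.sum_prod_type]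
      refine Finset.sum_congr rfl fun i _ => Finset.sum_congr rfl fun k0 _ => ?_
      rw [hrep p k0 l i, hrep p k0 l' i]
      simp only [star_mul']
      ring
    rw [h1, hwv_orth p p, if_pos rfl, one_mul] at hB2
    rw [hB2]
    simp [Prod.ext_iff]
  obtain ⟨p0⟩ := hn
  obtain ⟨l0⟩ := hm
  have hBex : ∃ k0, B p0 k0 l0 ≠ 0 := by
    by_contra hcon
    push_neg at hcon
    have h1 := hBun p0 l0 l0
    rw [if_pos rfl, Finset.sum_eq_zero (fun k0 _ => by rw [hcon k0, mul_zero])] at h1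
    exact zero_ne_one h1
  obtain ⟨k0, hk0⟩ := hBex
  set aa : ℂ := star (B p0 k0 l0) with haa_def
  have haa_ne : aa ≠ 0 := star_ne_zero.mpr hk0
  set ν : n → ℂ := fun q => star (B q k0 l0) with hν_def
  have hrel : ∀ q k l, B q k l * ν q = B p0 k l * aa := by
    intro q k l
    by_cases h : q = p0
    · subst h
      rfl
    · exact hBrel h k l k0 l0
  have hν_ne : ∀ q, ν q ≠ 0 := by
    intro q hq0
    have h := hrel q k0 l0
    rw [hq0, mul_zero] at h
    exact (mul_ne_zero hk0 haa_ne) h.symm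
  have hmod : ∀ q, star (ν q) * ν q = star aa * aa := by
    intro q
    have h := hrel q k0 l0
    calc star (ν q) * ν q = B q k0 l0 * star (B q k0 l0) := by
          rw [hν_def]
          simp only [star_star]
      _ = B p0 k0 l0 * star (B p0 k0 l0) := h
      _ = star aa * aa := by
          rw [haa_def]
          simp only [star_star]
  set μ : n → ℂ := fun q => aa / ν q with hμ_def
  have hμB : ∀ q k l, B q k l = μ q * B p0 k l := by
    intro q k l
    rw [hμ_def]
    simp only []
    rw [div_mul_eq_mul_div, eq_div_iff (hν_ne q)]
    linear_combination hrel q k l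
  have hμ_mod : ∀ q, star (μ q) * μ q = 1 := by
    intro q
    rw [hμ_def]
    simp only []
    rw [star_div₀]
    rw [div_mul_div_comm, hmod q]
    exact div_self (by
      rw [← hmod q]
      exact mul_ne_zero (star_ne_zero.mpr (hν_ne q)) (hν_ne q))
  refine ⟨Matrix.of (fun i q => μ q * wv q i), Matrix.of (fun k l => B p0 k l), ?_, ?_, ?_⟩
  · rw [Matrix.mem_unitaryGroup_iff']
    ext p q
    rw [Matrix.mul_apply, Matrix.one_apply]
    have hterm : ∀ i, (star (Matrix.of fun i q => μ q * wv q i)) p i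
        * (Matrix.of fun i q => μ q * wv q i) i q
        = (star (μ p) * μ q) * (star (wv p i) * wv q i) := by
      intro i
      rw [Matrix.star_apply, Matrix.of_apply, Matrix.of_apply, star_mul']
      ring
    rw [Finset.sum_congr rfl fun i _ => hterm i, ← Finset.mul_sum, hwv_orth p q]
    by_cases h : p = q
    · subst h
      simpa using hμ_mod p
    · simp [h]
  · rw [Matrix.mem_unitaryGroup_iff']
    ext l l'
    rw [Matrix.mul_apply, Matrix.one_apply]
    have hterm : ∀ k, (star (Matrix.of fun k l => B p0 k l)) l k
        * (Matrix.of fun k l => B p0 k l) k l' = star (B p0 k l) * B p0 k l' := by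
      intro k
      rw [Matrix.star_apply, Matrix.of_apply, Matrix.of_apply]
    rw [Finset.sum_congr rfl fun k _ => hterm k, hBun p0 l l']
  · ext ik ql
    obtain ⟨i, k⟩ := ik
    obtain ⟨q, l⟩ := ql
    rw [kroneckerMap_apply, Matrix.of_apply, Matrix.of_apply]
    rw [hrep q k l i, hμB q k l]
    ring
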